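/- arXiv:0710.2192 — 2 statements merged into one kernel-verified Lean document; each statement's English description precedes it below -/
import Mathlib

section
/- Let λ₀ ∈ (0,1] and Λ₀ > 0. Let A(t) be an n×n symmetric real matrix-valued function whose entries are Lipschitz continuous on ℝ, satisfying λ₀|ξ|² ≤ A(t)ξ·ξ ≤ λ₀⁻¹|ξ|² for every ξ ∈ ℝⁿ and t ∈ ℝ, and |A′(t)| ≤ Λ₀ for almost every t ∈ ℝ. Let √A(t) denote the (unique) positive square root of A(t). Then |d/dt √A(t)| ≤ 2^{3/2} λ₀^{−7/2} Λ₀ for almost every t ∈ ℝ. -/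
open MeasureTheory Real
open scoped BigOperators

noncomputable section

open Matrix
open scoped RealInnerProductSpace

lemma sqrt_sum_sq (v : Fin n → ℝ) : Real.sqrt (∑ i, v i ^ 2) = ‖(WithLp.equiv 2 (Fin n → ℝ)).symm v‖ := by
  rw [EuclideanSpace.norm_eq]
  simp [sq_abs]

lemma normsq_eq (x : EuclideanSpace ℝ (Fin n)) : ‖x‖ ^ 2 = ∑ i, x i ^ 2 := by
  rw [EuclideanSpace.norm_eq, Real.sq_sqrt (by positivity)]
  simp [sq_abs]

lemma toEuclideanLin_eigen {S : Matrix (Fin n) (Fin n) ℝ} (hS : S.IsHermitian) (i : Fin n) :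
    Matrix.toEuclideanLin S (hS.eigenvectorBasis i) = hS.eigenvalues i • hS.eigenvectorBasis i := by
  apply (WithLp.equiv 2 (Fin n → ℝ)).injective
  rw [WithLp.equiv_apply, Matrix.ofLp_toEuclideanLin_apply]
  simpa using hS.mulVec_eigenvectorBasis i

lemma repr_mulVec {S : Matrix (Fin n) (Fin n) ℝ} (hS : S.IsHermitian)
    (x : EuclideanSpace ℝ (Fin n)) (i : Fin n) :
    hS.eigenvectorBasis.repr (Matrix.toEuclideanLin S x) i
      = hS.eigenvalues i * hS.eigenvectorBasis.repr x i := by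
  rw [OrthonormalBasis.repr_apply_apply, OrthonormalBasis.repr_apply_apply]
  have hsymm := (Matrix.isHermitian_iff_isSymmetric).1 hS
  have h1 : ⟪(hS.eigenvectorBasis i : EuclideanSpace ℝ (Fin n)), Matrix.toEuclideanLin S x⟫
      = ⟪Matrix.toEuclideanLin S (hS.eigenvectorBasis i), x⟫ := (hsymm _ _).symm
  rw [h1, toEuclideanLin_eigen hS i, inner_smul_left]
  simp

lemma parseval (b : OrthonormalBasis (Fin n) ℝ (EuclideanSpace ℝ (Fin n)))
    (x : EuclideanSpace ℝ (Fin n)) : ∑ i, (b.repr x i) ^ 2 = ‖x‖ ^ 2 := by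
  rw [← b.repr.norm_map x, normsq_eq]

lemma inner_euc (x y : EuclideanSpace ℝ (Fin n)) : ⟪x, y⟫ = ∑ i, x i * y i := by
  simp [PiLp.inner_apply, mul_comm]

lemma quad_eq_sum {S : Matrix (Fin n) (Fin n) ℝ} (hS : S.IsHermitian)
    (x : EuclideanSpace ℝ (Fin n)) :
    ⟪x, Matrix.toEuclideanLin S x⟫
      = ∑ i, hS.eigenvalues i * (hS.eigenvectorBasis.repr x i) ^ 2 := by
  rw [← hS.eigenvectorBasis.repr.inner_map_map x (Matrix.toEuclideanLin S x), inner_euc]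
  refine Finset.sum_congr rfl fun i _ => ?_
  rw [repr_mulVec hS]
  ring

lemma norm_toEuclideanLin_le {S : Matrix (Fin n) (Fin n) ℝ} (hS : S.IsHermitian) {c : ℝ}
    (hc0 : 0 ≤ c) (hc : ∀ i, |hS.eigenvalues i| ≤ c) (x : EuclideanSpace ℝ (Fin n)) :
    ‖Matrix.toEuclideanLin S x‖ ≤ c * ‖x‖ := by
  have h1 : ‖Matrix.toEuclideanLin S x‖ ^ 2 ≤ (c * ‖x‖) ^ 2 := by
    rw [← hS.eigenvectorBasis.repr.norm_map (Matrix.toEuclideanLin S x), normsq_eq,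
      mul_pow, ← parseval hS.eigenvectorBasis x, Finset.mul_sum]
    refine Finset.sum_le_sum fun i _ => ?_
    rw [repr_mulVec hS, mul_pow]
    have := sq_le_sq' (neg_le_of_abs_le (hc i)) (le_of_abs_le (hc i))
    exact mul_le_mul_of_nonneg_right this (sq_nonneg _)
  exact (pow_le_pow_iff_left₀ (norm_nonneg _) (by positivity) two_ne_zero).1 h1

lemma toEuclideanLin_mul (M N : Matrix (Fin n) (Fin n) ℝ) (x : EuclideanSpace ℝ (Fin n)) :
    Matrix.toEuclideanLin (M * N) x = Matrix.toEuclideanLin M (Matrix.toEuclideanLin N x) := by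
  apply (WithLp.equiv 2 (Fin n → ℝ)).injective
  simp [Matrix.ofLp_toEuclideanLin_apply, Matrix.mulVec_mulVec]

lemma syl_eig {S P Q C : Matrix (Fin n) (Fin n) ℝ} (hS : S.IsHermitian)
    (hsyl : S * P + Q * S = C) {α β γ : ℝ} (hαβ : 0 < α + β)
    (hP : ∀ x : EuclideanSpace ℝ (Fin n), α * ‖x‖ ^ 2 ≤ ⟪x, Matrix.toEuclideanLin P x⟫)
    (hQ : ∀ x : EuclideanSpace ℝ (Fin n), β * ‖x‖ ^ 2 ≤ ⟪x, Matrix.toEuclideanLin Q x⟫)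
    (hC : ∀ x : EuclideanSpace ℝ (Fin n), |⟪x, Matrix.toEuclideanLin C x⟫| ≤ γ * ‖x‖ ^ 2)
    (i : Fin n) : |hS.eigenvalues i| ≤ γ / (α + β) := by
  set w := hS.eigenvectorBasis i with hw
  have hnw : ‖w‖ = 1 := hS.eigenvectorBasis.orthonormal.1 i
  set μ := hS.eigenvalues i with hμ
  have hsymm := (Matrix.isHermitian_iff_isSymmetric).1 hS
  have key : ⟪w, Matrix.toEuclideanLin C w⟫
      = μ * (⟪w, Matrix.toEuclideanLin P w⟫ + ⟪w, Matrix.toEuclideanLin Q w⟫) := by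
    rw [← hsyl, map_add, LinearMap.add_apply, inner_add_right, toEuclideanLin_mul,
      toEuclideanLin_mul]
    have h1 : ⟪w, Matrix.toEuclideanLin S (Matrix.toEuclideanLin P w)⟫
        = μ * ⟪w, Matrix.toEuclideanLin P w⟫ := by
      rw [← hsymm, hw, toEuclideanLin_eigen hS i, inner_smul_left]
      simp [hμ, hw]
    have h2 : ⟪w, Matrix.toEuclideanLin Q (Matrix.toEuclideanLin S w)⟫
        = μ * ⟪w, Matrix.toEuclideanLin Q w⟫ := by
      rw [hw, toEuclideanLin_eigen hS i, _root_.map_smul, inner_smul_right, hμ]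
    rw [h1, h2]; ring
  have hPw := hP w; have hQw := hQ w
  rw [hnw, one_pow, mul_one] at hPw hQw
  have hCw := hC w
  rw [hnw, one_pow, mul_one, key, abs_mul] at hCw
  have hpos : 0 < ⟪w, Matrix.toEuclideanLin P w⟫ + ⟪w, Matrix.toEuclideanLin Q w⟫ :=
    lt_of_lt_of_le hαβ (add_le_add hPw hQw)
  rw [abs_of_pos hpos] at hCw
  rw [le_div_iff₀ hαβ]
  calc |μ| * (α + β) ≤ |μ| * (⟪w, Matrix.toEuclideanLin P w⟫ + ⟪w, Matrix.toEuclideanLin Q w⟫) :=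
        mul_le_mul_of_nonneg_left (add_le_add hPw hQw) (abs_nonneg _)
    _ ≤ γ := hCw

lemma posdef_sqrt_lower {A B : Matrix (Fin n) (Fin n) ℝ} (hB : B.PosDef) (hBA : B * B = A)
    {lam : ℝ} (hlam : 0 ≤ lam)
    (hA : ∀ x : EuclideanSpace ℝ (Fin n), lam * ‖x‖ ^ 2 ≤ ⟪x, Matrix.toEuclideanLin A x⟫) :
    ∀ x : EuclideanSpace ℝ (Fin n), Real.sqrt lam * ‖x‖ ^ 2 ≤ ⟪x, Matrix.toEuclideanLin B x⟫ := by
  have hBH := hB.1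
  have heig : ∀ i, Real.sqrt lam ≤ hBH.eigenvalues i := by
    intro i
    have hpos := hB.eigenvalues_pos i
    have hw : ‖hBH.eigenvectorBasis i‖ = 1 := hBH.eigenvectorBasis.orthonormal.1 i
    have h1 : ⟪hBH.eigenvectorBasis i, Matrix.toEuclideanLin A (hBH.eigenvectorBasis i)⟫
        = hBH.eigenvalues i ^ 2 := by
      rw [← hBA, toEuclideanLin_mul, toEuclideanLin_eigen hBH i, _root_.map_smul,
        toEuclideanLin_eigen hBH i, smul_smul, inner_smul_right,
        real_inner_self_eq_norm_sq, hw]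
      ring
    have h2 := hA (hBH.eigenvectorBasis i)
    rw [hw, one_pow, mul_one, h1] at h2
    calc Real.sqrt lam ≤ Real.sqrt (hBH.eigenvalues i ^ 2) := Real.sqrt_le_sqrt h2
      _ = hBH.eigenvalues i := by rw [Real.sqrt_sq hpos.le]
  intro x
  rw [quad_eq_sum hBH x, ← parseval hBH.eigenvectorBasis x, Finset.mul_sum]
  exact Finset.sum_le_sum fun i _ =>
    mul_le_mul_of_nonneg_right (heig i) (sq_nonneg _)

lemma quadform_eq (M : Matrix (Fin n) (Fin n) ℝ) (x : EuclideanSpace ℝ (Fin n)) :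
    ⟪x, Matrix.toEuclideanLin M x⟫ = ∑ i, ∑ j, M i j * x i * x j := by
  rw [inner_euc]
  refine Finset.sum_congr rfl fun i _ => ?_
  have : (Matrix.toEuclideanLin M x) i = ∑ j, M i j * x j := rfl
  rw [this, Finset.mul_sum]
  exact Finset.sum_congr rfl fun j _ => by ring

lemma norm_mulVec_eq (M : Matrix (Fin n) (Fin n) ℝ) (v : Fin n → ℝ) :
    Real.sqrt (∑ i, (∑ j, M i j * v j) ^ 2)
      = ‖Matrix.toEuclideanLin M ((WithLp.equiv 2 (Fin n → ℝ)).symm v)‖ := by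
  have h : ∀ i, (∑ j, M i j * v j)
      = (Matrix.toEuclideanLin M ((WithLp.equiv 2 (Fin n → ℝ)).symm v)) i := fun i => rfl
  simp_rw [h]
  exact sqrt_sum_sq _

lemma abs_apply_le (x : EuclideanSpace ℝ (Fin n)) (i : Fin n) : |x i| ≤ ‖x‖ := by
  rw [EuclideanSpace.norm_eq]
  have h1 : |x i| = Real.sqrt (‖x i‖ ^ 2) := by
    rw [Real.sqrt_sq_eq_abs]; simp
  rw [h1]
  exact Real.sqrt_le_sqrt (Finset.single_le_sum (f := fun j => ‖x j‖ ^ 2)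
    (fun j _ => by positivity) (Finset.mem_univ i))

abbrev E (n : ℕ) := EuclideanSpace ℝ (Fin n)

/-- Let `A(t)` be a symmetric matrix-valued function with Lipschitz
entries, satisfying `λ₀|ξ|² ≤ A(t)ξ·ξ ≤ λ₀⁻¹|ξ|²` and `|A′(t)| ≤ Λ₀` a.e. (in operator
norm, expressed through the action on vectors).  If `B(t)` is the positive square root
of `A(t)`, then a.e. `B` is differentiable and `|d/dt B(t)| ≤ 2^{3/2} λ₀^{−7/2} Λ₀`
(again in the `ℓ² → ℓ²` operator norm, expressed through the action on vectors). -/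
theorem stmt_12 (n : ℕ) (lam0 Lam0 : ℝ)
    (hlam0 : lam0 ∈ Set.Ioc (0 : ℝ) 1) (hLam0 : 0 < Lam0)
    (A B : ℝ → Matrix (Fin n) (Fin n) ℝ)
    (hAsym : ∀ t, (A t).IsSymm)
    (hALip : ∃ K : NNReal, ∀ i j, LipschitzWith K (fun t => A t i j))
    (hell_lo : ∀ t (ξ : Fin n → ℝ),
      lam0 * ∑ i, ξ i ^ 2 ≤ ∑ i, ∑ j, A t i j * ξ i * ξ j)
    (hell_hi : ∀ t (ξ : Fin n → ℝ),
      ∑ i, ∑ j, A t i j * ξ i * ξ j ≤ lam0⁻¹ * ∑ i, ξ i ^ 2)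
    (hA'bound : ∀ᵐ t ∂(volume : Measure ℝ), ∀ v : Fin n → ℝ,
      Real.sqrt (∑ i, (∑ j, deriv (fun s => A s i j) t * v j) ^ 2)
        ≤ Lam0 * Real.sqrt (∑ i, v i ^ 2))
    (hBsqrt : ∀ t, (B t).PosDef ∧ B t * B t = A t) :
    ∀ᵐ t ∂(volume : Measure ℝ),
      (∀ i j, DifferentiableAt ℝ (fun s => B s i j) t) ∧
      ∀ v : Fin n → ℝ,
        Real.sqrt (∑ i, (∑ j, deriv (fun s => B s i j) t * v j) ^ 2)
          ≤ 2 ^ ((3 : ℝ) / 2) * lam0 ^ (-(7 : ℝ) / 2) * Lam0 *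
              Real.sqrt (∑ i, v i ^ 2) := by
  obtain ⟨hl0, hl1⟩ := hlam0
  have hsl : 0 < Real.sqrt lam0 := Real.sqrt_pos.2 hl0
  -- quadratic lower bound for B t
  have hBlo : ∀ t (x : E n), Real.sqrt lam0 * ‖x‖ ^ 2 ≤ ⟪x, Matrix.toEuclideanLin (B t) x⟫ := by
    intro t
    refine posdef_sqrt_lower (hBsqrt t).1 (hBsqrt t).2 hl0.le fun x => ?_
    rw [quadform_eq, normsq_eq]
    exact hell_lo t x
  -- symmetry of B entries
  have hBsymm : ∀ s i j, B s j i = B s i j := by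
    intro s i j
    have h := (hBsqrt s).1.1
    calc B s j i = star ((B s)ᴴ i j) := by simp [Matrix.conjTranspose_apply]
      _ = B s i j := by rw [h]; simp
  -- Lipschitz of B entries
  obtain ⟨K, hK⟩ := hALip
  set L : ℝ := (n : ℝ) * K / (Real.sqrt lam0 + Real.sqrt lam0) with hL
  have hL0 : 0 ≤ L := by positivity
  have hBlip : ∀ i j, LipschitzWith L.toNNReal (fun t => B t i j) := by
    intro i j
    refine LipschitzWith.of_dist_le_mul fun t s => ?_
    rw [Real.dist_eq, Real.dist_eq]
    set S := B t - B s with hS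
    have hSH : S.IsHermitian := (hBsqrt t).1.1.sub (hBsqrt s).1.1
    have hsyl : S * B s + B t * S = A t - A s := by
      rw [hS, ← (hBsqrt t).2, ← (hBsqrt s).2]
      noncomm_ring
    have hC : ∀ x : E n, |⟪x, Matrix.toEuclideanLin (A t - A s) x⟫|
        ≤ ((n : ℝ) * K * |t - s|) * ‖x‖ ^ 2 := by
      intro x
      rw [quadform_eq, normsq_eq]
      calc |∑ i, ∑ j', (A t - A s) i j' * x i * x j'|
          ≤ ∑ i, |∑ j', (A t - A s) i j' * x i * x j'| := Finset.abs_sum_le_sum_abs _ _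
        _ ≤ ∑ i, ∑ j', |(A t - A s) i j' * x i * x j'| :=
            Finset.sum_le_sum fun i _ => Finset.abs_sum_le_sum_abs _ _
        _ ≤ ∑ i, ∑ j', (K * |t - s|) * (|x i| * |x j'|) := by
            refine Finset.sum_le_sum fun i _ => Finset.sum_le_sum fun j' _ => ?_
            rw [abs_mul, abs_mul]
            have hent : |(A t - A s) i j'| ≤ K * |t - s| := by
              have := (hK i j').dist_le_mul t s
              rw [Real.dist_eq, Real.dist_eq] at this
              simpa [Matrix.sub_apply] using this
            have h2 : |(A t - A s) i j'| * |x i| * |x j'|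
                ≤ (K * |t - s|) * |x i| * |x j'| := by
              gcongr
            linarith [h2]
        _ = (K * |t - s|) * (∑ i, |x i|) ^ 2 := by
            rw [sq, Finset.sum_mul_sum]
            simp only [Finset.mul_sum]
        _ ≤ ((n : ℝ) * K * |t - s|) * ∑ i, x i ^ 2 := by
            have hcs := Finset.sum_mul_sq_le_sq_mul_sq Finset.univ
              (fun _ : Fin n => (1 : ℝ)) (fun i => |x i|)
            simp only [one_mul, one_pow, sq_abs, Finset.sum_const, Finset.card_univ,
              Fintype.card_fin, nsmul_eq_mul, mul_one] at hcs
            calc (K : ℝ) * |t - s| * (∑ i, |x i|) ^ 2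
                ≤ (K : ℝ) * |t - s| * ((n : ℝ) * ∑ i, x i ^ 2) := by
                  refine mul_le_mul_of_nonneg_left hcs (by positivity)
              _ = ((n : ℝ) * K * |t - s|) * ∑ i, x i ^ 2 := by ring
    have hpos2 : 0 < Real.sqrt lam0 + Real.sqrt lam0 := by positivity
    have heig := fun i' => syl_eig hSH hsyl hpos2 (hBlo s) (hBlo t) hC i'
    have hnorm := norm_toEuclideanLin_le hSH (by positivity) heig
    have hTe : Matrix.toEuclideanLin S ((WithLp.equiv 2 (Fin n → ℝ)).symm (Pi.single j 1))
        = (WithLp.equiv 2 (Fin n → ℝ)).symm (S *ᵥ Pi.single j 1) := by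
      rw [Matrix.toEuclideanLin_apply]
      simp
    have hsingle : ((WithLp.equiv 2 (Fin n → ℝ)).symm (Pi.single j 1))
        = EuclideanSpace.single j (1 : ℝ) := rfl
    have hentry : |S i j| ≤ ((n : ℝ) * K * |t - s|) / (Real.sqrt lam0 + Real.sqrt lam0) := by
      have h6 : ((WithLp.equiv 2 (Fin n → ℝ)).symm (S *ᵥ Pi.single j 1)) i = S i j := by
        simp
      calc |S i j|
          = |((WithLp.equiv 2 (Fin n → ℝ)).symm (S *ᵥ Pi.single j 1)) i| := by rw [h6]
        _ ≤ ‖(WithLp.equiv 2 (Fin n → ℝ)).symm (S *ᵥ Pi.single j 1)‖ := abs_apply_le _ i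
        _ = ‖Matrix.toEuclideanLin S ((WithLp.equiv 2 (Fin n → ℝ)).symm (Pi.single j 1))‖ := by
            rw [hTe]
        _ ≤ ((n : ℝ) * K * |t - s|) / (Real.sqrt lam0 + Real.sqrt lam0)
              * ‖(WithLp.equiv 2 (Fin n → ℝ)).symm (Pi.single j 1)‖ := hnorm _
        _ = ((n : ℝ) * K * |t - s|) / (Real.sqrt lam0 + Real.sqrt lam0) := by
            rw [hsingle, EuclideanSpace.norm_single]
            simp
    have hfin : |B t i j - B s i j| ≤ L * |t - s| := by
      have h7 : ((n : ℝ) * K * |t - s|) / (Real.sqrt lam0 + Real.sqrt lam0) = L * |t - s| := by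
        rw [hL]; field_simp
      calc |B t i j - B s i j| = |S i j| := by rw [hS]; simp [Matrix.sub_apply]
        _ ≤ _ := hentry
        _ = L * |t - s| := h7
    rwa [Real.coe_toNNReal L hL0]
  -- a.e. differentiability
  have hdiff : ∀ᵐ t ∂(volume : MeasureTheory.Measure ℝ),
      ∀ i j, DifferentiableAt ℝ (fun s => B s i j) t := by
    rw [MeasureTheory.ae_all_iff]
    intro i
    rw [MeasureTheory.ae_all_iff]
    intro j
    exact (hBlip i j).ae_differentiableAt
  filter_upwards [hA'bound, hdiff] with t hA't hdt
  refine ⟨hdt, ?_⟩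
  set D : Matrix (Fin n) (Fin n) ℝ := Matrix.of fun i j => deriv (fun s => B s i j) t with hD
  have hDsymm : ∀ i j, D j i = D i j := by
    intro i j
    simp only [hD, Matrix.of_apply]
    congr 1
    funext s
    exact hBsymm s i j
  have hDH : D.IsHermitian := by
    ext i j
    simp only [Matrix.conjTranspose_apply, star_trivial]
    exact hDsymm i j
  set A' : Matrix (Fin n) (Fin n) ℝ := Matrix.of fun i j => deriv (fun s => A s i j) t with hA'
  have hA'eq : D * B t + B t * D = A' := by
    ext i j
    have hfun : (fun s => A s i j) = fun s => ∑ k, B s i k * B s k j := by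
      funext s
      rw [← (hBsqrt s).2, Matrix.mul_apply]
    have hder : HasDerivAt (fun s => ∑ k, B s i k * B s k j)
        (∑ k, (D i k * B t k j + B t i k * D k j)) t :=
      HasDerivAt.fun_sum fun k _ => ((hdt i k).hasDerivAt.mul (hdt k j).hasDerivAt)
    show (D * B t + B t * D) i j = A' i j
    simp only [hA', Matrix.of_apply, Matrix.add_apply, Matrix.mul_apply]
    rw [hfun, hder.deriv, Finset.sum_add_distrib]
  have hxid : ∀ x : E n, (WithLp.equiv 2 (Fin n → ℝ)).symm (fun j => x j) = x := fun x => rfl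
  have hCt : ∀ x : E n, |⟪x, Matrix.toEuclideanLin A' x⟫| ≤ Lam0 * ‖x‖ ^ 2 := by
    intro x
    have h2 : Real.sqrt (∑ i, (∑ j, A' i j * x j) ^ 2)
        ≤ Lam0 * Real.sqrt (∑ i, x i ^ 2) := by
      simpa only [hA', Matrix.of_apply] using hA't (fun j => x j)
    rw [norm_mulVec_eq A' (fun j => x j), sqrt_sum_sq (fun i => x i), hxid x] at h2
    calc |⟪x, Matrix.toEuclideanLin A' x⟫|
        ≤ ‖x‖ * ‖Matrix.toEuclideanLin A' x‖ := abs_real_inner_le_norm _ _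
      _ ≤ ‖x‖ * (Lam0 * ‖x‖) := mul_le_mul_of_nonneg_left h2 (norm_nonneg _)
      _ = Lam0 * ‖x‖ ^ 2 := by ring
  have hpos2 : 0 < Real.sqrt lam0 + Real.sqrt lam0 := by positivity
  have heig := fun i' => syl_eig hDH hA'eq hpos2 (hBlo t) (hBlo t) hCt i'
  have hnorm := norm_toEuclideanLin_le hDH (by positivity) heig
  have hconst : Lam0 / (Real.sqrt lam0 + Real.sqrt lam0)
      ≤ 2 ^ ((3 : ℝ) / 2) * lam0 ^ (-(7 : ℝ) / 2) * Lam0 := by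
    have hs2 : Real.sqrt lam0 + Real.sqrt lam0 = 2 * lam0 ^ ((1 : ℝ) / 2) := by
      rw [Real.sqrt_eq_rpow]; ring
    have he1 : lam0 ^ (-(1 : ℝ) / 2) ≤ lam0 ^ (-(7 : ℝ) / 2) :=
      Real.rpow_le_rpow_of_exponent_ge hl0 hl1 (by norm_num)
    have hrp : (0 : ℝ) < lam0 ^ ((1 : ℝ) / 2) := Real.rpow_pos_of_pos hl0 _
    have he2 : Lam0 / (2 * lam0 ^ ((1 : ℝ) / 2)) = 2⁻¹ * lam0 ^ (-(1 : ℝ) / 2) * Lam0 := by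
      rw [neg_div, Real.rpow_neg hl0.le]
      field_simp
    have h12 : (2⁻¹ : ℝ) ≤ 2 ^ ((3 : ℝ) / 2) := by
      have h13 : (1 : ℝ) ≤ 2 ^ ((3 : ℝ) / 2) := Real.one_le_rpow one_le_two (by norm_num)
      linarith
    rw [hs2, he2]
    gcongr
  intro v
  have hgoalL : Real.sqrt (∑ i, (∑ j, deriv (fun s => B s i j) t * v j) ^ 2)
      = ‖Matrix.toEuclideanLin D ((WithLp.equiv 2 (Fin n → ℝ)).symm v)‖ := by
    simpa only [hD, Matrix.of_apply] using norm_mulVec_eq D v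
  rw [hgoalL, sqrt_sum_sq v]
  calc ‖Matrix.toEuclideanLin D ((WithLp.equiv 2 (Fin n → ℝ)).symm v)‖
      ≤ Lam0 / (Real.sqrt lam0 + Real.sqrt lam0)
          * ‖(WithLp.equiv 2 (Fin n → ℝ)).symm v‖ := hnorm _
    _ ≤ 2 ^ ((3 : ℝ) / 2) * lam0 ^ (-(7 : ℝ) / 2) * Lam0
          * ‖(WithLp.equiv 2 (Fin n → ℝ)).symm v‖ :=
        mul_le_mul_of_nonneg_right hconst (norm_nonneg _)
end
end

section
/- Let {Ω₁(t)}_{t∈ℝ} and {Ω₂(t)}_{t∈ℝ} be two families of bounded domains in ℝⁿ satisfying |Ω_i(t)| ≤ M R₀ⁿ for t ∈ [0,T], i = 1,2, and such that for each i the boundary portion ∪_{t∈[0,T]} ∂Ω_i(t)×{t} of the lateral boundary of ∪_{t∈ℝ} Ω_i(t)×{t} is of class C^{2,β} with constants R₀, E. Then for every t, τ ∈ [0,T]: | d_H( cl Ω₁(t), cl Ω₂(t) ) − d_H( cl Ω₁(τ), cl Ω₂(τ) ) | ≤ C |t−τ| / R₀, where C depends only on E, M and β. -/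
open MeasureTheory Real
open scoped BigOperators ENNReal

noncomputable section

/-- Spatial partial derivative in the direction `i`. -/
def pder {n : ℕ} (i : Fin n) (f : EuclideanSpace ℝ (Fin n) → ℝ)
    (x : EuclideanSpace ℝ (Fin n)) : ℝ :=
  fderiv ℝ f x (EuclideanSpace.single i 1)

/-- The first `m+1` coordinates `x′` of a point `x ∈ ℝ^{m+2}`. -/
def headCoords {m : ℕ} (x : EuclideanSpace ℝ (Fin (m + 2))) :
    EuclideanSpace ℝ (Fin (m + 1)) :=
  (EuclideanSpace.equiv (Fin (m + 1)) ℝ).symm (fun i => x i.castSucc)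

/-- The last coordinate `x_n` of a point `x ∈ ℝ^{m+2}`. -/
def lastCoord {m : ℕ} (x : EuclideanSpace ℝ (Fin (m + 2))) : ℝ := x (Fin.last (m + 1))

/-- Quantitative parabolic `C^{2,β}` bounds (with constants `R₀`, `Ebd`) for a local
graph function `φ = φ(x′,t)` normalized at the origin. -/
structure GraphC2β (m : ℕ) (β R₀ Ebd : ℝ)
    (φ : EuclideanSpace ℝ (Fin (m + 1)) → ℝ → ℝ) : Prop where
  val0 : φ 0 0 = 0
  grad0 : gradient (fun y => φ y 0) 0 = 0
  smooth : ContDiffOn ℝ 2 (fun p : EuclideanSpace ℝ (Fin (m + 1)) × ℝ => φ p.1 p.2)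
    (Metric.ball 0 R₀ ×ˢ Set.Ioo (-(R₀ ^ 2)) (R₀ ^ 2))
  bound : ∀ y ∈ Metric.ball (0 : EuclideanSpace ℝ (Fin (m + 1))) R₀,
    ∀ t ∈ Set.Ioo (-(R₀ ^ 2)) (R₀ ^ 2),
    |φ y t| + R₀ * ‖gradient (fun z => φ z t) y‖ +
      R₀ ^ 2 * ‖fderiv ℝ (fun z => gradient (fun w => φ w t) z) y‖ +
      R₀ ^ 2 * |deriv (φ y) t| ≤ Ebd * R₀
  holder : ∀ y ∈ Metric.ball (0 : EuclideanSpace ℝ (Fin (m + 1))) R₀,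
    ∀ t ∈ Set.Ioo (-(R₀ ^ 2)) (R₀ ^ 2),
    ∀ y' ∈ Metric.ball (0 : EuclideanSpace ℝ (Fin (m + 1))) R₀,
    ∀ t' ∈ Set.Ioo (-(R₀ ^ 2)) (R₀ ^ 2),
    ‖fderiv ℝ (fun z => gradient (fun w => φ w t) z) y -
        fderiv ℝ (fun z => gradient (fun w => φ w t') z) y'‖ ≤
      Ebd * R₀ ^ (-(1 + β)) * (‖y - y'‖ ^ 2 + |t - t'|) ^ (β / 2)

/-- A space-time portion `Γ` of the lateral boundary of the family
`t ↦ Ω(t)` is of class `C^{2,β}` with constants `R₀`, `Ebd`:  near each of its points,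
after a rigid change of space coordinates, `Ω(t)` is the epigraph of a `C^{2,β}`
function `φ`. -/
def BoundaryC2β (m : ℕ) (β R₀ Ebd : ℝ)
    (Ω : ℝ → Set (EuclideanSpace ℝ (Fin (m + 2))))
    (Γ : Set (EuclideanSpace ℝ (Fin (m + 2)) × ℝ)) : Prop :=
  ∀ p ∈ Γ, ∃ σ : EuclideanSpace ℝ (Fin (m + 2)) ≃ᵃⁱ[ℝ] EuclideanSpace ℝ (Fin (m + 2)),
    ∃ φ : EuclideanSpace ℝ (Fin (m + 1)) → ℝ → ℝ,
      σ p.1 = 0 ∧ GraphC2β m β R₀ Ebd φ ∧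
      ∀ (x : EuclideanSpace ℝ (Fin (m + 2))) (t : ℝ),
        ‖headCoords (σ x)‖ < R₀ → |lastCoord (σ x)| < R₀ → |t - p.2| < R₀ ^ 2 →
        (x ∈ Ω t ↔ φ (headCoords (σ x)) (t - p.2) < lastCoord (σ x))

/-- Interior of `S` relative to `F`. -/
def relInt {X : Type*} [TopologicalSpace X] (F S : Set X) : Set X :=
  {x ∈ S | ∃ U : Set X, IsOpen U ∧ x ∈ U ∧ U ∩ F ⊆ S}

/-- Boundary of `S` relative to `F`. -/
def relBd {X : Type*} [TopologicalSpace X] (F S : Set X) : Set X :=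
  {x ∈ F | ∀ U : Set X, IsOpen U → x ∈ U →
    (U ∩ S).Nonempty ∧ (U ∩ (F \ S)).Nonempty}

/-- The a priori geometric assumptions on an admissible family of domains
`{Ω(t)}` with accessible boundary part `A`, unknown parts `I(t)`, and distinguished
portions `Σ ⊆ Σ̃ ⊆ A` around a point `P₀`. -/
structure AdmissibleFamily (m : ℕ) (β R₀ Ebd M T : ℝ)
    (Ω : ℝ → Set (EuclideanSpace ℝ (Fin (m + 2))))
    (A : Set (EuclideanSpace ℝ (Fin (m + 2))))
    (I : ℝ → Set (EuclideanSpace ℝ (Fin (m + 2))))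
    (Sig SigT : Set (EuclideanSpace ℝ (Fin (m + 2))))
    (P₀ : EuclideanSpace ℝ (Fin (m + 2))) : Prop where
  isOpen : ∀ t, IsOpen (Ω t)
  isBounded : ∀ t, Bornology.IsBounded (Ω t)
  isConnected : ∀ t, IsConnected (Ω t)
  measBound : ∀ t ∈ Set.Icc (0 : ℝ) T, volume (Ω t) ≤ ENNReal.ofReal (M * R₀ ^ (m + 2))
  lateralC2 : BoundaryC2β m β R₀ Ebd Ω
    {p | p.2 ∈ Set.Icc (0 : ℝ) T ∧ p.1 ∈ frontier (Ω p.2)}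
  decomp : ∀ t ∈ Set.Icc (0 : ℝ) T, A ∪ I t = frontier (Ω t)
  Anonempty : A.Nonempty
  Inonempty : ∀ t ∈ Set.Icc (0 : ℝ) T, (I t).Nonempty
  intDisjoint : ∀ t ∈ Set.Icc (0 : ℝ) T,
    relInt (frontier (Ω t)) A ∩ relInt (frontier (Ω t)) (I t) = ∅
  bdA : ∀ t ∈ Set.Icc (0 : ℝ) T, A ∩ I t = relBd (frontier (Ω t)) A
  bdI : ∀ t ∈ Set.Icc (0 : ℝ) T, A ∩ I t = relBd (frontier (Ω t)) (I t)
  accC2 : BoundaryC2β m β R₀ Ebd Ω {p | p.2 ∈ Set.Icc (0 : ℝ) T ∧ p.1 ∈ A}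
  unknC2 : BoundaryC2β m β R₀ Ebd Ω {p | p.2 ∈ Set.Icc (0 : ℝ) T ∧ p.1 ∈ I p.2}
  SigSub : Sig ⊆ SigT
  SigTSub : SigT ⊆ A
  P0mem : P₀ ∈ Sig
  SigCover : ∀ t ∈ Set.Icc (0 : ℝ) T, frontier (Ω t) ∩ Metric.ball P₀ R₀ ⊆ Sig
  SigTFar : ∀ t ∈ Set.Icc (0 : ℝ) T, ∀ x ∈ SigT, R₀ ≤ Metric.infDist x (I t)

/-- The assumptions on the thermal conductivity tensor `κ = κ(x,t,z)`. -/
structure Conductivity (m : ℕ) (R₀ lam Lam : ℝ)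
    (κ : EuclideanSpace ℝ (Fin (m + 2)) → ℝ → ℝ → Fin (m + 2) → Fin (m + 2) → ℝ) :
    Prop where
  symm : ∀ x t z i j, κ x t z i j = κ x t z j i
  ellip_lo : ∀ x t z (ξ : Fin (m + 2) → ℝ),
    lam * ∑ i, ξ i ^ 2 ≤ ∑ i, ∑ j, κ x t z i j * ξ i * ξ j
  ellip_hi : ∀ x t z (ξ : Fin (m + 2) → ℝ),
    ∑ i, ∑ j, κ x t z i j * ξ i * ξ j ≤ lam⁻¹ * ∑ i, ξ i ^ 2
  derivBound : ∃ N₁ N₂ N₃ : ℝ,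
    (∀ x t z i j, ‖gradient (fun y => κ y t z i j) x‖ ≤ N₁) ∧
    (∀ x t z i j, |deriv (fun s => κ x s z i j) t| ≤ N₂) ∧
    (∀ x t z i j, |deriv (deriv (fun w => κ x t w i j)) z| ≤ N₃) ∧
    R₀ * N₁ + R₀ ^ 2 * N₂ + N₃ ≤ Lam

/-- The assumptions on the initial datum `u₀` and the boundary datum `f`. -/
structure DataAssumptions (m : ℕ) (R₀ F₀ T : ℝ) (F₁ : ℝ → ℝ)
    (Ω0 I0 A SigT : Set (EuclideanSpace ℝ (Fin (m + 2))))
    (u₀ : EuclideanSpace ℝ (Fin (m + 2)) → ℝ)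
    (f : EuclideanSpace ℝ (Fin (m + 2)) → ℝ → ℝ) : Prop where
  u0_smooth : ContDiffOn ℝ 2 u₀ (closure Ω0)
  u0_vanish : ∀ x ∈ I0, u₀ x = 0
  u0_bound : ∀ x ∈ closure Ω0,
    |u₀ x| + R₀ * ‖gradient u₀ x‖ + R₀ ^ 2 * ‖fderiv ℝ (gradient u₀) x‖ ≤ F₀
  f_smooth : ContDiffOn ℝ 2 (fun p : EuclideanSpace ℝ (Fin (m + 2)) × ℝ => f p.1 p.2)
    (A ×ˢ Set.Icc (0 : ℝ) T)
  f_init : ∀ x ∈ A, f x 0 = u₀ x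
  f_supp : ∀ t ∈ Set.Icc (0 : ℝ) T, ∀ x ∈ A \ SigT, f x t = 0
  f_bound : ∀ x ∈ A, ∀ t ∈ Set.Icc (0 : ℝ) T, |f x t| ≤ F₀
  f_lower : ∀ t ∈ Set.Icc (0 : ℝ) T, F₁ t ≤ sSup ((fun x => |f x t|) '' A)

/-- `u` is a (regular) solution of the Cauchy–Dirichlet problem
`div(κ(x,t,u)∇u) − ∂ₜu = 0` in `∪ₜ Ω(t)×{t}`, `u = f` on `A×(0,T]`,
`u = 0` on the unknown lateral boundary, `u(·,0) = u₀`. -/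
structure SolvesIBVP (m : ℕ) (T : ℝ)
    (κ : EuclideanSpace ℝ (Fin (m + 2)) → ℝ → ℝ → Fin (m + 2) → Fin (m + 2) → ℝ)
    (Ω : ℝ → Set (EuclideanSpace ℝ (Fin (m + 2))))
    (A : Set (EuclideanSpace ℝ (Fin (m + 2))))
    (I : ℝ → Set (EuclideanSpace ℝ (Fin (m + 2))))
    (u₀ : EuclideanSpace ℝ (Fin (m + 2)) → ℝ)
    (f u : EuclideanSpace ℝ (Fin (m + 2)) → ℝ → ℝ) : Prop where
  pde : ∀ t ∈ Set.Ioo (0 : ℝ) T, ∀ x ∈ Ω t,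
    (∑ i, pder i (fun y => ∑ j, κ y t (u y t) i j *
        pder j (fun z => u z t) y) x) = deriv (u x) t
  bcA : ∀ t ∈ Set.Ioc (0 : ℝ) T, ∀ x ∈ A, u x t = f x t
  bcI : ∀ t ∈ Set.Ioc (0 : ℝ) T, ∀ x ∈ I t, u x t = 0
  init : ∀ x ∈ closure (Ω 0), u x 0 = u₀ x
  reg : ContinuousOn (fun p : EuclideanSpace ℝ (Fin (m + 2)) × ℝ => u p.1 p.2)
    {p | p.2 ∈ Set.Icc (0 : ℝ) T ∧ p.1 ∈ closure (Ω p.2)}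

/-- `ν` is an exterior unit normal direction to `Ω` at the boundary point `x`. -/
def IsOuterNormal {n : ℕ} (Ω : Set (EuclideanSpace ℝ (Fin n)))
    (x ν : EuclideanSpace ℝ (Fin n)) : Prop :=
  ‖ν‖ = 1 ∧ ∃ ε > 0, (∀ s ∈ Set.Ioo (0 : ℝ) ε, x + s • ν ∉ closure Ω) ∧
    (∀ s ∈ Set.Ioo (0 : ℝ) ε, x - s • ν ∈ Ω)

/-- The heat flux `κ(x,t,u)∇u · ν` through the boundary. -/
def fluxBdry (m : ℕ)
    (κ : EuclideanSpace ℝ (Fin (m + 2)) → ℝ → ℝ → Fin (m + 2) → Fin (m + 2) → ℝ)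
    (u : EuclideanSpace ℝ (Fin (m + 2)) → ℝ → ℝ)
    (ν : EuclideanSpace ℝ (Fin (m + 2)) → ℝ → EuclideanSpace ℝ (Fin (m + 2)))
    (x : EuclideanSpace ℝ (Fin (m + 2))) (t : ℝ) : ℝ :=
  ∑ i, (∑ j, κ x t (u x t) i j * pder j (fun z => u z t) x) * ν x t i

namespace Stmt18Aux

open Metric Set

variable {m : ℕ}

/-- Build a point of `ℝ^{m+2}` from head coordinates and last coordinate. -/
def mkPt (y : EuclideanSpace ℝ (Fin (m + 1))) (c : ℝ) : EuclideanSpace ℝ (Fin (m + 2)) :=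
  (EuclideanSpace.equiv (Fin (m + 2)) ℝ).symm (Fin.snoc (fun i => y i) c)

lemma headCoords_apply (x : EuclideanSpace ℝ (Fin (m + 2))) (i : Fin (m + 1)) :
    headCoords x i = x i.castSucc := rfl

lemma mkPt_castSucc (y : EuclideanSpace ℝ (Fin (m + 1))) (c : ℝ) (i : Fin (m + 1)) :
    mkPt y c i.castSucc = y i := by
  show Fin.snoc (α := fun _ : Fin (m + 2) => ℝ) (fun j => y j) c i.castSucc = y i
  rw [Fin.snoc_castSucc]

lemma mkPt_last (y : EuclideanSpace ℝ (Fin (m + 1))) (c : ℝ) :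
    mkPt y c (Fin.last (m + 1)) = c := by
  show Fin.snoc (α := fun _ : Fin (m + 2) => ℝ) (fun j => y j) c (Fin.last (m + 1)) = c
  rw [Fin.snoc_last]

lemma lastCoord_mkPt (y : EuclideanSpace ℝ (Fin (m + 1))) (c : ℝ) :
    lastCoord (mkPt y c) = c := mkPt_last y c

lemma headCoords_mkPt (y : EuclideanSpace ℝ (Fin (m + 1))) (c : ℝ) :
    headCoords (mkPt y c) = y := by
  ext i
  rw [headCoords_apply, mkPt_castSucc]

lemma mkPt_head_last (x : EuclideanSpace ℝ (Fin (m + 2))) :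
    mkPt (headCoords x) (lastCoord x) = x := by
  ext i
  induction i using Fin.lastCases with
  | last => rw [mkPt_last]; rfl
  | cast i => rw [mkPt_castSucc, headCoords_apply]

lemma abs_lastCoord_le (x : EuclideanSpace ℝ (Fin (m + 2))) : |lastCoord x| ≤ ‖x‖ := by
  rw [EuclideanSpace.norm_eq]
  have h1 : |lastCoord x| = Real.sqrt (‖x (Fin.last (m + 1))‖ ^ 2) := by
    rw [Real.sqrt_sq_eq_abs, Real.norm_eq_abs, abs_abs]; rfl
  rw [h1]
  apply Real.sqrt_le_sqrt
  exact Finset.single_le_sum (f := fun i => ‖x i‖ ^ 2) (fun i _ => by positivity)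
    (Finset.mem_univ _)

lemma norm_headCoords_le (x : EuclideanSpace ℝ (Fin (m + 2))) : ‖headCoords x‖ ≤ ‖x‖ := by
  rw [EuclideanSpace.norm_eq, EuclideanSpace.norm_eq]
  apply Real.sqrt_le_sqrt
  have h1 : ∑ i : Fin (m + 1), ‖headCoords x i‖ ^ 2
      = ∑ i : Fin (m + 1), ‖x i.castSucc‖ ^ 2 := by
    refine Finset.sum_congr rfl fun i _ => by rw [headCoords_apply]
  rw [h1]
  conv_rhs => rw [Fin.sum_univ_castSucc]
  have : (0:ℝ) ≤ ‖x (Fin.last (m + 1))‖ ^ 2 := by positivity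
  linarith

lemma dist_mkPt (y : EuclideanSpace ℝ (Fin (m + 1))) (c c' : ℝ) :
    dist (mkPt y c) (mkPt y c') = |c - c'| := by
  rw [EuclideanSpace.dist_eq]
  have h1 : ∑ i : Fin (m + 2), dist (mkPt y c i) (mkPt y c' i) ^ 2 = dist c c' ^ 2 := by
    rw [Fin.sum_univ_castSucc]
    have h2 : ∀ i : Fin (m + 1), dist (mkPt y c i.castSucc) (mkPt y c' i.castSucc) ^ 2 = 0 :=
      fun i => by rw [mkPt_castSucc, mkPt_castSucc, dist_self]; ring
    rw [Finset.sum_congr rfl (fun i _ => h2 i), mkPt_last, mkPt_last]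
    simp
  rw [h1, Real.sqrt_sq dist_nonneg, Real.dist_eq]

/-- Time-Lipschitz bound for the graph function, from the bound on `∂ₜφ`. -/
lemma _root_.GraphC2β.timeLip {β R₀ Ebd : ℝ} {φ : EuclideanSpace ℝ (Fin (m + 1)) → ℝ → ℝ}
    (hφ : GraphC2β m β R₀ Ebd φ) (hR : 0 < R₀)
    {y : EuclideanSpace ℝ (Fin (m + 1))} (hy : y ∈ Metric.ball 0 R₀)
    {a b : ℝ} (ha : a ∈ Set.Ioo (-(R₀ ^ 2)) (R₀ ^ 2)) (hb : b ∈ Set.Ioo (-(R₀ ^ 2)) (R₀ ^ 2)) :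
    |φ y b - φ y a| ≤ Ebd / R₀ * |b - a| := by
  have hdiff : ∀ x ∈ Set.Ioo (-(R₀ ^ 2)) (R₀ ^ 2), DifferentiableAt ℝ (φ y) x := by
    intro x hx
    have h1 : ContDiffAt ℝ 2 (fun p : EuclideanSpace ℝ (Fin (m + 1)) × ℝ => φ p.1 p.2) (y, x) :=
      hφ.smooth.contDiffAt ((Metric.isOpen_ball.prod isOpen_Ioo).mem_nhds ⟨hy, hx⟩)
    have h2 := h1.differentiableAt (by norm_num)
    have h3 : DifferentiableAt ℝ (fun t : ℝ => ((y, t) :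
        EuclideanSpace ℝ (Fin (m + 1)) × ℝ)) x :=
      DifferentiableAt.prodMk (differentiableAt_const y) differentiableAt_id
    simpa [Function.comp_def] using h2.comp x h3
  have hbound : ∀ x ∈ Set.Ioo (-(R₀ ^ 2)) (R₀ ^ 2), |deriv (φ y) x| ≤ Ebd / R₀ := by
    intro x hx
    have hb2 := hφ.bound y hy x hx
    have h1 : 0 ≤ |φ y x| := abs_nonneg _
    have h2 : 0 ≤ R₀ * ‖gradient (fun z => φ z x) y‖ := by positivity
    have h3 : 0 ≤ R₀ ^ 2 * ‖fderiv ℝ (fun z => gradient (fun w => φ w x) z) y‖ := by positivity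
    rw [le_div_iff₀ hR]
    nlinarith [abs_nonneg (deriv (φ y) x), sq_nonneg R₀]
  have key : ∀ u v : ℝ, u ∈ Set.Ioo (-(R₀ ^ 2)) (R₀ ^ 2) → v ∈ Set.Ioo (-(R₀ ^ 2)) (R₀ ^ 2) →
      u ≤ v → |φ y v - φ y u| ≤ Ebd / R₀ * (v - u) := by
    intro u v hu hv huv
    rcases eq_or_lt_of_le huv with rfl | hlt
    · simp
    have hsub : Set.Icc u v ⊆ Set.Ioo (-(R₀ ^ 2)) (R₀ ^ 2) := fun x hx =>
      ⟨lt_of_lt_of_le hu.1 hx.1, lt_of_le_of_lt hx.2 hv.2⟩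
    have hdOn : DifferentiableOn ℝ (φ y) (Set.Icc u v) := fun x hx =>
      (hdiff x (hsub hx)).differentiableWithinAt
    have hb' : ∀ x ∈ Set.Ico u v, ‖derivWithin (φ y) (Set.Icc u v) x‖ ≤ Ebd / R₀ := by
      intro x hx
      have hx' : x ∈ Set.Ioo (-(R₀ ^ 2)) (R₀ ^ 2) := hsub ⟨hx.1, hx.2.le⟩
      rw [(hdiff x hx').derivWithin ((uniqueDiffOn_Icc hlt) x ⟨hx.1, hx.2.le⟩)]
      simpa [Real.norm_eq_abs] using hbound x hx'
    have := norm_image_sub_le_of_norm_deriv_le_segment hdOn hb' v (right_mem_Icc.2 huv)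
    simpa [Real.norm_eq_abs] using this
  rcases le_total a b with h | h
  · have := key a b ha hb h
    rwa [abs_of_nonneg (sub_nonneg.2 h)]
  · have := key b a hb ha h
    rw [abs_sub_comm, abs_sub_comm b a]
    rwa [abs_of_nonneg (sub_nonneg.2 h)]

/-- Main step: for two nearby times, every point of `Ω t` is close to `closure (Ω s)`. -/
lemma stepInfDist {β R₀ Ebd T : ℝ} (hR : 0 < R₀) (hE : 0 < Ebd)
    {Ω : ℝ → Set (EuclideanSpace ℝ (Fin (m + 2)))}
    (hop : ∀ t, IsOpen (Ω t)) (hbd : ∀ t, Bornology.IsBounded (Ω t))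
    (hcn : ∀ t, IsConnected (Ω t))
    (hbc : BoundaryC2β m β R₀ Ebd Ω {p | p.2 ∈ Set.Icc (0 : ℝ) T ∧ p.1 ∈ frontier (Ω p.2)})
    {t s : ℝ} (ht : t ∈ Set.Icc (0 : ℝ) T) (hs : s ∈ Set.Icc (0 : ℝ) T)
    (hts : |t - s| ≤ R₀ ^ 2 / (2 * (1 + 4 * Ebd))) :
    ∀ x ∈ Ω t, Metric.infDist x (closure (Ω s)) ≤ Ebd / R₀ * |t - s| := by
  set K := closure (Ω s) with hKdef
  set L' := Ebd / R₀ * |t - s| with hL'def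
  have hR2 : (0:ℝ) < R₀ ^ 2 := by positivity
  have habs : 0 ≤ |t - s| := abs_nonneg _
  have hL'0 : 0 ≤ L' := mul_nonneg (div_pos hE hR).le habs
  have hden : (0:ℝ) < 2 * (1 + 4 * Ebd) := by nlinarith
  have hδlt : |t - s| < R₀ ^ 2 := by
    apply lt_of_le_of_lt hts
    rw [div_lt_iff₀ hden]
    nlinarith
  have hL'8 : L' ≤ R₀ / 8 := by
    have h2 : Ebd / R₀ * (R₀ ^ 2 / (2 * (1 + 4 * Ebd))) ≤ R₀ / 8 := by
      have heq : Ebd / R₀ * (R₀ ^ 2 / (2 * (1 + 4 * Ebd))) = Ebd * R₀ / (2 * (1 + 4 * Ebd)) := by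
        field_simp
      rw [heq, div_le_div_iff₀ hden (by norm_num : (0:ℝ) < 8)]
      nlinarith
    calc L' ≤ Ebd / R₀ * (R₀ ^ 2 / (2 * (1 + 4 * Ebd))) :=
          mul_le_mul_of_nonneg_left hts (div_pos hE hR).le
      _ ≤ R₀ / 8 := h2
  have hIoo : (t - s) ∈ Set.Ioo (-(R₀ ^ 2)) (R₀ ^ 2) := by
    constructor
    · have := abs_lt.mp hδlt; linarith [this.1]
    · exact lt_of_le_of_lt (le_abs_self _) hδlt
  have h0Ioo : (0:ℝ) ∈ Set.Ioo (-(R₀ ^ 2)) (R₀ ^ 2) := ⟨by linarith, hR2⟩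
  have hKcp : IsCompact K := (hbd s).isCompact_closure
  have hKne : K.Nonempty := (hcn s).nonempty.closure
  -- the barrier estimate
  have barrier : ∀ x ∈ Ω t, Metric.infDist x K < R₀ / 2 → Metric.infDist x K ≤ L' := by
    intro x hx hxK
    by_cases hmem : x ∈ K
    · rw [Metric.infDist_zero_of_mem hmem]; exact hL'0
    obtain ⟨z, hzK, hzd⟩ := hKcp.exists_infDist_eq_dist hKne x
    have hxz : 0 < dist x z := dist_pos.2 (fun h => hmem (h ▸ hzK))
    have hzΩ : z ∉ Ω s := by
      intro hzΩ
      obtain ⟨ε, hε, hball⟩ := Metric.isOpen_iff.mp (hop s) z hzΩ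
      set r := min (ε / 2) (dist x z) with hrdef
      have hr0 : 0 < r := lt_min (by linarith) hxz
      have hrd : r ≤ dist x z := min_le_right _ _
      set z' := z + (r / dist x z) • (x - z) with hz'def
      have hz'ball : z' ∈ Metric.ball z ε := by
        rw [Metric.mem_ball, dist_eq_norm]
        have he : z' - z = (r / dist x z) • (x - z) := by rw [hz'def]; module
        rw [he, norm_smul, Real.norm_eq_abs, abs_of_nonneg (by positivity : 0 ≤ r / dist x z),
          ← dist_eq_norm]
        rw [div_mul_cancel₀ _ hxz.ne']
        calc r ≤ ε / 2 := min_le_left _ _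
          _ < ε := by linarith
      have hd' : dist x z' = dist x z - r := by
        rw [dist_eq_norm]
        have he : x - z' = (1 - r / dist x z) • (x - z) := by
          rw [hz'def]
          module
        rw [he, norm_smul, Real.norm_eq_abs, ← dist_eq_norm,
          abs_of_nonneg (by rw [sub_nonneg, div_le_one hxz]; exact hrd)]
        field_simp
      have hle : Metric.infDist x K ≤ dist x z' :=
        Metric.infDist_le_dist_of_mem (subset_closure (hball hz'ball))
      rw [hzd, hd'] at hle
      linarith
    have hzfr : z ∈ frontier (Ω s) := by
      rw [(hop s).frontier_eq]; exact ⟨hzK, hzΩ⟩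
    obtain ⟨σ, φ, hσz, hφ, hiff⟩ := hbc (z, s) ⟨hs, hzfr⟩
    set w := σ x with hwdef
    have hwn : ‖w‖ = dist x z := by
      rw [← dist_zero_right, ← hσz]
      exact σ.dist_map x z
    have hwlt : ‖w‖ < R₀ / 2 := by rw [hwn, ← hzd]; exact hxK
    have hhead : ‖headCoords w‖ < R₀ := lt_of_le_of_lt (norm_headCoords_le w) (by linarith)
    have hlast2 : |lastCoord w| < R₀ / 2 := lt_of_le_of_lt (abs_lastCoord_le w) hwlt
    have hlast : |lastCoord w| < R₀ := by linarith
    have hheadball : headCoords w ∈ Metric.ball (0 : EuclideanSpace ℝ (Fin (m + 1))) R₀ := by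
      rwa [Metric.mem_ball, dist_zero_right]
    have hifft := hiff x t hhead hlast (by simpa using hδlt)
    have hφt : φ (headCoords w) (t - s) < lastCoord w := hifft.mp hx
    have hiffs := hiff x s hhead hlast (by simpa using hR2)
    simp only [sub_self] at hiffs
    have hφs : lastCoord w ≤ φ (headCoords w) 0 := by
      by_contra hcon
      push_neg at hcon
      exact hmem (subset_closure (hiffs.mpr hcon))
    have hMVT := hφ.timeLip hR hheadball h0Ioo hIoo
    rw [sub_zero] at hMVT
    have hMVT' := abs_le.mp hMVT
    set c := φ (headCoords w) 0 with hcdef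
    have h1 : c - lastCoord w < L' := by
      have h2 : c - φ (headCoords w) (t - s) ≤ L' := by
        rw [hL'def]; linarith [hMVT'.1]
      linarith
    have hlb : -(R₀ / 2) < lastCoord w := by
      have := abs_lt.mp hlast2; linarith [this.1]
    have hclb : -(R₀ / 2) < c := lt_of_lt_of_le hlb hφs
    have hcub : c < R₀ := by
      have : lastCoord w < R₀ / 2 := lt_of_le_of_lt (le_abs_self _) hlast2
      linarith
    set g := σ.symm (mkPt (headCoords w) c) with hgdef
    have hgK : g ∈ K := by
      rw [hKdef, Metric.mem_closure_iff]
      intro ε hε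
      set ε' := min (ε / 2) ((R₀ - c) / 2) with hε'def
      have hε'0 : 0 < ε' := lt_min (by linarith) (by linarith)
      have hε'le : ε' ≤ (R₀ - c) / 2 := min_le_right _ _
      refine ⟨σ.symm (mkPt (headCoords w) (c + ε')), ?_, ?_⟩
      · have happ := hiff (σ.symm (mkPt (headCoords w) (c + ε'))) s
        rw [σ.apply_symm_apply, headCoords_mkPt, lastCoord_mkPt] at happ
        have hcε : |c + ε'| < R₀ := by
          rw [abs_lt]; constructor <;> [linarith; linarith]
        have := happ hhead hcε (by simpa using hR2)
        simp only [sub_self] at this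
        exact this.mpr (by linarith)
      · have hde : dist g (σ.symm (mkPt (headCoords w) (c + ε'))) =
            dist (mkPt (headCoords w) c) (mkPt (headCoords w) (c + ε')) :=
          σ.symm.dist_map _ _
        rw [hde, dist_mkPt]
        rw [abs_of_nonpos (by linarith)]
        have : ε' ≤ ε / 2 := min_le_left _ _
        linarith
    have hdistg : dist x g = c - lastCoord w := by
      have h3 : dist x g = dist (σ x) (σ g) := (σ.dist_map x g).symm
      have h4 := dist_mkPt (headCoords w) (lastCoord w) c
      rw [mkPt_head_last w] at h4
      rw [h3, hgdef, σ.apply_symm_apply, ← hwdef, h4, abs_of_nonpos (by linarith)]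
      ring
    calc Metric.infDist x K ≤ dist x g := Metric.infDist_le_dist_of_mem hgK
      _ ≤ L' := by rw [hdistg]; exact h1.le
  -- a common point of `Ω t` and `Ω s`
  have hfr_ne : (frontier (Ω s)).Nonempty := by
    by_contra hfe
    rw [Set.not_nonempty_iff_eq_empty] at hfe
    have hcl : IsClosed (Ω s) := by
      rw [← closure_subset_iff_isClosed]
      intro y hy
      by_contra hyΩ
      have : y ∈ frontier (Ω s) := by rw [(hop s).frontier_eq]; exact ⟨hy, hyΩ⟩
      simp [hfe] at this
    rcases isClopen_iff.mp ⟨hcl, hop s⟩ with h | h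
    · exact (hcn s).nonempty.ne_empty h
    · obtain ⟨r, hr⟩ := (Metric.isBounded_iff_subset_closedBall 0).mp (hbd s)
      have hmem : mkPt (0 : EuclideanSpace ℝ (Fin (m + 1))) (|r| + 1) ∈ Ω s := by
        rw [h]; exact Set.mem_univ _
      have h4 := hr hmem
      rw [Metric.mem_closedBall, dist_zero_right] at h4
      have h2 := abs_lastCoord_le (mkPt (0 : EuclideanSpace ℝ (Fin (m + 1))) (|r| + 1))
      rw [lastCoord_mkPt] at h2
      have h5 : |r| + 1 ≤ |(|r| + 1)| := le_abs_self _
      have h6 : r ≤ |r| := le_abs_self r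
      linarith
  obtain ⟨z₀, hz₀⟩ := hfr_ne
  obtain ⟨σ, φ, hσz, hφ, hiff⟩ := hbc (z₀, s) ⟨hs, hz₀⟩
  set h₀ := L' + R₀ / 8 with hh₀def
  have hh₀pos : 0 < h₀ := by rw [hh₀def]; linarith
  have hh₀lt : h₀ < R₀ := by rw [hh₀def]; linarith
  have hh₀abs : |h₀| < R₀ := by rw [abs_of_pos hh₀pos]; exact hh₀lt
  set x₀ := σ.symm (mkPt 0 h₀) with hx₀def
  have h0ball : (0 : EuclideanSpace ℝ (Fin (m + 1))) ∈ Metric.ball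
      (0 : EuclideanSpace ℝ (Fin (m + 1))) R₀ := Metric.mem_ball_self hR
  have h0head : ‖(0 : EuclideanSpace ℝ (Fin (m + 1)))‖ < R₀ := by simpa using hR
  have hφ0ts : φ 0 (t - s) ≤ L' := by
    have hm := hφ.timeLip hR h0ball h0Ioo hIoo
    rw [sub_zero, hφ.val0, sub_zero] at hm
    have := abs_le.mp hm
    rw [hL'def]; linarith [this.2]
  have hx₀t : x₀ ∈ Ω t := by
    have happ := hiff (σ.symm (mkPt 0 h₀)) t
    rw [σ.apply_symm_apply, headCoords_mkPt, lastCoord_mkPt, ← hx₀def] at happ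
    have hlt : φ 0 (t - s) < h₀ := by
      rw [hh₀def]
      have h8 : 0 < R₀ / 8 := by linarith
      linarith [hφ0ts]
    exact (happ h0head hh₀abs (by simpa using hδlt)).mpr hlt
  have hx₀s : x₀ ∈ Ω s := by
    have happ := hiff (σ.symm (mkPt 0 h₀)) s
    rw [σ.apply_symm_apply, headCoords_mkPt, lastCoord_mkPt, ← hx₀def] at happ
    have h5 := happ h0head hh₀abs (by simpa using hR2)
    simp only [sub_self] at h5
    exact h5.mpr (by rw [hφ.val0]; linarith)
  have hx₀K : Metric.infDist x₀ K = 0 :=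
    Metric.infDist_zero_of_mem (subset_closure hx₀s)
  -- connectedness argument
  intro x hx
  by_contra hcon
  push_neg at hcon
  have hpc := (hcn t).isPreconnected
  have hu : IsOpen {y : EuclideanSpace ℝ (Fin (m + 2)) | Metric.infDist y K < R₀ / 2} :=
    isOpen_lt (Metric.continuous_infDist_pt K) continuous_const
  have hv : IsOpen {y : EuclideanSpace ℝ (Fin (m + 2)) | L' < Metric.infDist y K} :=
    isOpen_lt continuous_const (Metric.continuous_infDist_pt K)
  have hcov : Ω t ⊆ {y | Metric.infDist y K < R₀ / 2} ∪ {y | L' < Metric.infDist y K} := by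
    intro y _
    by_cases h : Metric.infDist y K < R₀ / 2
    · exact Or.inl h
    · push_neg at h
      exact Or.inr (lt_of_le_of_lt (by linarith : L' ≤ R₀ / 8) (by linarith))
  have hne_u : (Ω t ∩ {y | Metric.infDist y K < R₀ / 2}).Nonempty :=
    ⟨x₀, hx₀t, by simp only [Set.mem_setOf_eq, hx₀K]; linarith⟩
  have hne_v : (Ω t ∩ {y | L' < Metric.infDist y K}).Nonempty := ⟨x, hx, hcon⟩
  obtain ⟨y, hyΩ, hyu, hyv⟩ := hpc _ _ hu hv hcov hne_u hne_v
  exact absurd (barrier y hyΩ hyu) (not_le.mpr hyv)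

/-- Hausdorff-distance step estimate for a single family. -/
lemma stepHD {β R₀ Ebd T : ℝ} (hR : 0 < R₀) (hE : 0 < Ebd)
    {Ω : ℝ → Set (EuclideanSpace ℝ (Fin (m + 2)))}
    (hop : ∀ t, IsOpen (Ω t)) (hbd : ∀ t, Bornology.IsBounded (Ω t))
    (hcn : ∀ t, IsConnected (Ω t))
    (hbc : BoundaryC2β m β R₀ Ebd Ω {p | p.2 ∈ Set.Icc (0 : ℝ) T ∧ p.1 ∈ frontier (Ω p.2)})
    {t s : ℝ} (ht : t ∈ Set.Icc (0 : ℝ) T) (hs : s ∈ Set.Icc (0 : ℝ) T)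
    (hts : |t - s| ≤ R₀ ^ 2 / (2 * (1 + 4 * Ebd))) :
    Metric.hausdorffDist (closure (Ω t)) (closure (Ω s)) ≤ Ebd / R₀ * |t - s| := by
  have hL'0 : 0 ≤ Ebd / R₀ * |t - s| := mul_nonneg (div_pos hE hR).le (abs_nonneg _)
  apply Metric.hausdorffDist_le_of_infDist hL'0
  · intro x hx
    have hsub : Ω t ⊆ {y | Metric.infDist y (closure (Ω s)) ≤ Ebd / R₀ * |t - s|} :=
      fun y hy => stepInfDist hR hE hop hbd hcn hbc ht hs hts y hy
    exact closure_minimal hsub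
      (isClosed_le (Metric.continuous_infDist_pt _) continuous_const) hx
  · intro x hx
    have hts' : |s - t| ≤ R₀ ^ 2 / (2 * (1 + 4 * Ebd)) := by rwa [abs_sub_comm]
    have hsub : Ω s ⊆ {y | Metric.infDist y (closure (Ω t)) ≤ Ebd / R₀ * |t - s|} := by
      intro y hy
      have := stepInfDist hR hE hop hbd hcn hbc hs ht hts' y hy
      simpa [abs_sub_comm s t] using this
    exact closure_minimal hsub
      (isClosed_le (Metric.continuous_infDist_pt _) continuous_const) hx

/-- Difference of Hausdorff distances via the triangle inequality. -/
lemma hd_diff_le {α : Type*} [MetricSpace α] {A A' B B' : Set α}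
    (hA : A.Nonempty) (hA' : A'.Nonempty) (hB : B.Nonempty) (hB' : B'.Nonempty)
    (bA : Bornology.IsBounded A) (bA' : Bornology.IsBounded A')
    (bB : Bornology.IsBounded B) (bB' : Bornology.IsBounded B') :
    |Metric.hausdorffDist A B - Metric.hausdorffDist A' B'| ≤
      Metric.hausdorffDist A A' + Metric.hausdorffDist B B' := by
  have f1 : EMetric.hausdorffEdist A A' ≠ ⊤ :=
    Metric.hausdorffEdist_ne_top_of_nonempty_of_bounded hA hA' bA bA'
  have f2 : EMetric.hausdorffEdist A' B ≠ ⊤ :=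
    Metric.hausdorffEdist_ne_top_of_nonempty_of_bounded hA' hB bA' bB
  have f3 : EMetric.hausdorffEdist B B' ≠ ⊤ :=
    Metric.hausdorffEdist_ne_top_of_nonempty_of_bounded hB hB' bB bB'
  have f4 : EMetric.hausdorffEdist A' B' ≠ ⊤ :=
    Metric.hausdorffEdist_ne_top_of_nonempty_of_bounded hA' hB' bA' bB'
  have f5 : EMetric.hausdorffEdist A B ≠ ⊤ :=
    Metric.hausdorffEdist_ne_top_of_nonempty_of_bounded hA hB bA bB
  rw [abs_sub_le_iff]
  constructor
  · have t1 : Metric.hausdorffDist A B ≤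
        Metric.hausdorffDist A A' + Metric.hausdorffDist A' B :=
      Metric.hausdorffDist_triangle f1
    have t2 : Metric.hausdorffDist A' B ≤
        Metric.hausdorffDist A' B' + Metric.hausdorffDist B' B :=
      Metric.hausdorffDist_triangle f4
    rw [Metric.hausdorffDist_comm (s := B') (t := B)] at t2
    linarith
  · have t1 : Metric.hausdorffDist A' B' ≤
        Metric.hausdorffDist A' A + Metric.hausdorffDist A B' :=
      Metric.hausdorffDist_triangle (by rw [Metric.hausdorffEDist_comm]; exact f1)
    have t2 : Metric.hausdorffDist A B' ≤
        Metric.hausdorffDist A B + Metric.hausdorffDist B B' :=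
      Metric.hausdorffDist_triangle f5
    rw [Metric.hausdorffDist_comm (s := A') (t := A)] at t1
    linarith

/-- Local-to-global Lipschitz chain lemma on `[0, T]`. -/
lemma chainLip {f : ℝ → ℝ} {T δ Kc : ℝ} (hδ : 0 < δ) (hK : 0 ≤ Kc)
    (hstep : ∀ a ∈ Set.Icc (0 : ℝ) T, ∀ b ∈ Set.Icc (0 : ℝ) T, a ≤ b → b - a ≤ δ →
      |f b - f a| ≤ Kc * (b - a)) :
    ∀ a ∈ Set.Icc (0 : ℝ) T, ∀ b ∈ Set.Icc (0 : ℝ) T, a ≤ b → |f b - f a| ≤ Kc * (b - a) := by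
  suffices H : ∀ n : ℕ, ∀ a ∈ Set.Icc (0 : ℝ) T, ∀ b ∈ Set.Icc (0 : ℝ) T, a ≤ b →
      b - a ≤ n * δ → |f b - f a| ≤ Kc * (b - a) by
    intro a ha b hb hab
    obtain ⟨n, hn⟩ := exists_nat_ge ((b - a) / δ)
    have hba : b - a ≤ n * δ := by
      rw [div_le_iff₀ hδ] at hn; linarith
    exact H n a ha b hb hab hba
  intro n
  induction n with
  | zero =>
    intro a ha b hb hab hba
    have hba' : b = a := by push_cast at hba; linarith
    simp [hba']
  | succ n ih =>
    intro a ha b hb hab hba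
    rcases le_or_gt (b - a) δ with h | h
    · exact hstep a ha b hb hab h
    · set c := a + δ with hcdef
      have hac : a ≤ c := by linarith
      have hcb : c ≤ b := by linarith
      have hc : c ∈ Set.Icc (0 : ℝ) T := ⟨by linarith [ha.1], by linarith [hb.2]⟩
      have h1 := hstep a ha c hc hac (by linarith)
      have h2 := ih c hc b hb hcb (by push_cast at hba ⊢; linarith)
      calc |f b - f a| ≤ |f b - f c| + |f c - f a| := by
            have := abs_sub_le (f b) (f c) (f a)
            simpa using this
        _ ≤ Kc * (b - c) + Kc * (c - a) := add_le_add h2 h1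
        _ = Kc * (b - a) := by ring

end Stmt18Aux

/-- If `{Ω₁(t)}` and `{Ω₂(t)}` are two families of bounded domains
in `ℝⁿ` satisfying `|Ω_i(t)| ≤ M R₀ⁿ` on `[0,T]` whose lateral boundaries over `[0,T]`
are of class `C^{2,β}` with constants `R₀`, `E`, then the map
`t ↦ d_H(cl Ω₁(t), cl Ω₂(t))` is Lipschitz:
`|d_H(t) − d_H(τ)| ≤ C |t−τ|/R₀` with `C` depending only on `E`, `M`, `β`. -/
theorem stmt_18 (m : ℕ) (β : ℝ) (hβ : β ∈ Set.Ioo (0 : ℝ) 1) (Ebd M : ℝ)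
    (hEbd : 0 < Ebd) (hM : 0 < M) :
    ∃ C : ℝ, 0 < C ∧
    ∀ (R₀ T : ℝ) (Ω₁ Ω₂ : ℝ → Set (EuclideanSpace ℝ (Fin (m + 2)))),
      0 < R₀ → 0 < T →
      (∀ t, IsOpen (Ω₁ t) ∧ IsOpen (Ω₂ t)) →
      (∀ t, Bornology.IsBounded (Ω₁ t) ∧ Bornology.IsBounded (Ω₂ t)) →
      (∀ t, IsConnected (Ω₁ t) ∧ IsConnected (Ω₂ t)) →
      (∀ t ∈ Set.Icc (0 : ℝ) T,
        volume (Ω₁ t) ≤ ENNReal.ofReal (M * R₀ ^ (m + 2)) ∧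
        volume (Ω₂ t) ≤ ENNReal.ofReal (M * R₀ ^ (m + 2))) →
      BoundaryC2β m β R₀ Ebd Ω₁
        {p | p.2 ∈ Set.Icc (0 : ℝ) T ∧ p.1 ∈ frontier (Ω₁ p.2)} →
      BoundaryC2β m β R₀ Ebd Ω₂
        {p | p.2 ∈ Set.Icc (0 : ℝ) T ∧ p.1 ∈ frontier (Ω₂ p.2)} →
      ∀ t ∈ Set.Icc (0 : ℝ) T, ∀ τ ∈ Set.Icc (0 : ℝ) T,
        |Metric.hausdorffDist (closure (Ω₁ t)) (closure (Ω₂ t)) -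
            Metric.hausdorffDist (closure (Ω₁ τ)) (closure (Ω₂ τ))| ≤
          C * |t - τ| / R₀ := by
  refine ⟨2 * Ebd, by linarith, ?_⟩
  intro R₀ T Ω₁ Ω₂ hR hT hop hbd hcn _hvol hbc₁ hbc₂ t ht τ hτ
  set δ := R₀ ^ 2 / (2 * (1 + 4 * Ebd)) with hδdef
  have hδ0 : 0 < δ := by
    apply div_pos (by positivity)
    nlinarith
  set f := fun r : ℝ => Metric.hausdorffDist (closure (Ω₁ r)) (closure (Ω₂ r)) with hfdef
  have hstep : ∀ a ∈ Set.Icc (0 : ℝ) T, ∀ b ∈ Set.Icc (0 : ℝ) T, a ≤ b → b - a ≤ δ →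
      |f b - f a| ≤ (2 * Ebd / R₀) * (b - a) := by
    intro a ha b hb hab hba
    have habs : |b - a| ≤ δ := by rw [abs_of_nonneg (by linarith)]; exact hba
    have h1 : Metric.hausdorffDist (closure (Ω₁ b)) (closure (Ω₁ a)) ≤ Ebd / R₀ * |b - a| :=
      Stmt18Aux.stepHD hR hEbd (fun r => (hop r).1) (fun r => (hbd r).1)
        (fun r => (hcn r).1) hbc₁ hb ha habs
    have h2 : Metric.hausdorffDist (closure (Ω₂ b)) (closure (Ω₂ a)) ≤ Ebd / R₀ * |b - a| :=
      Stmt18Aux.stepHD hR hEbd (fun r => (hop r).2) (fun r => (hbd r).2)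
        (fun r => (hcn r).2) hbc₂ hb ha habs
    have hd := Stmt18Aux.hd_diff_le
      ((hcn b).1.nonempty.closure) ((hcn a).1.nonempty.closure)
      ((hcn b).2.nonempty.closure) ((hcn a).2.nonempty.closure)
      ((hbd b).1.closure) ((hbd a).1.closure) ((hbd b).2.closure) ((hbd a).2.closure)
    have hfin : |f b - f a| ≤ Ebd / R₀ * |b - a| + Ebd / R₀ * |b - a| := by
      calc |f b - f a| ≤ _ + _ := hd
        _ ≤ Ebd / R₀ * |b - a| + Ebd / R₀ * |b - a| := add_le_add h1 h2
    calc |f b - f a| ≤ Ebd / R₀ * |b - a| + Ebd / R₀ * |b - a| := hfin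
      _ = (2 * Ebd / R₀) * |b - a| := by ring
      _ = (2 * Ebd / R₀) * (b - a) := by rw [abs_of_nonneg (by linarith)]
  have hK0 : 0 ≤ 2 * Ebd / R₀ := by positivity
  have main : ∀ a ∈ Set.Icc (0 : ℝ) T, ∀ b ∈ Set.Icc (0 : ℝ) T, a ≤ b →
      |f b - f a| ≤ (2 * Ebd / R₀) * (b - a) :=
    Stmt18Aux.chainLip hδ0 hK0 hstep
  rcases le_total τ t with h | h
  · have := main τ hτ t ht h
    calc |f t - f τ| ≤ (2 * Ebd / R₀) * (t - τ) := this
      _ = 2 * Ebd * |t - τ| / R₀ := by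
        rw [abs_of_nonneg (by linarith)]; ring
  · have := main t ht τ hτ h
    rw [abs_sub_comm] at this
    calc |f t - f τ| ≤ (2 * Ebd / R₀) * (τ - t) := this
      _ = 2 * Ebd * |t - τ| / R₀ := by
        rw [abs_sub_comm, abs_of_nonneg (by linarith)]; ring
end
end
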